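/- Let n ≥ 1 and p ∈ (0,1), and let G(n,n,p) be the random bipartite graph with parts of size n in which each of the n² possible edges is present independently with probability p. Then Pr(G(n,n,p) has a perfect matching) ≥ 1 − (n+1)³·(1−p)^{⌊n/2⌋}. -/

import Mathlib

open MeasureTheory Finset

private lemma sum_fn_ennreal {ι κ : Type*} [Fintype ι] [DecidableEq ι] [Fintype κ]
    (g : ι → κ → ENNReal) :
    ∑ f : ι → κ, ∏ i, g i (f i) = ∏ i, ∑ x, g i x := by
  have := Finset.sum_prod_piFinset (Finset.univ : Finset κ) g
  rwa [Fintype.piFinset_univ] at this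

private lemma measure_set_eq_sum {X : Type*} [Fintype X] [MeasurableSpace X]
    [MeasurableSingletonClass X] (μ : Measure X) (S : Set X) [DecidablePred (· ∈ S)] :
    μ S = ∑ x ∈ Finset.univ.filter (· ∈ S), μ {x} := by
  have hS : S = ⋃ x ∈ (Finset.univ.filter (· ∈ S) : Finset X), ({x} : Set X) := by
    ext y; simp
  have hd : Set.PairwiseDisjoint (↑(Finset.univ.filter (· ∈ S) : Finset X))
      (fun x => ({x} : Set X)) := by
    intro x _ y _ hxy
    simp [Function.onFun, Set.disjoint_singleton, hxy]
  have := measure_biUnion_finset (μ := μ) hd (fun x _ => measurableSet_singleton x)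
  rw [← hS] at this
  exact this

private lemma exists_violator (n : ℕ) (ω : Fin n → Fin n → Bool)
    (h : ¬ ∃ σ : Equiv.Perm (Fin n), ∀ j, ω (σ j) j = true) :
    ∃ B : Finset (Fin n), 1 ≤ B.card ∧ B.card ≤ n ∧
      ∃ A : Finset (Fin n), A.card = n + 1 - B.card ∧ ∀ i ∈ A, ∀ j ∈ B, ω i j = false := by
  classical
  set t : Fin n → Finset (Fin n) := fun j => Finset.univ.filter (fun i => ω i j = true) with ht
  have hhall : ¬ ∀ s : Finset (Fin n), s.card ≤ (s.biUnion t).card := by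
    intro hall
    obtain ⟨f, hfinj, hf⟩ := (Finset.all_card_le_biUnion_card_iff_exists_injective t).mp hall
    refine h ⟨Equiv.ofBijective f ((Finite.injective_iff_bijective).mp hfinj), fun j => ?_⟩
    have := hf j
    simp only [ht, Finset.mem_filter, Finset.mem_univ, true_and] at this
    simpa using this
  push_neg at hhall
  obtain ⟨s, hs⟩ := hhall
  have hsn : s.card ≤ n := by
    have := Finset.card_le_univ s
    simpa using this
  refine ⟨s, by omega, hsn, ?_⟩
  have hcard : n + 1 - s.card ≤ ((s.biUnion t)ᶜ).card := by
    rw [Finset.card_compl]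
    simp only [Fintype.card_fin]
    omega
  obtain ⟨A, hA, hAc⟩ := Finset.exists_subset_card_eq hcard
  refine ⟨A, hAc, fun i hi j hj => ?_⟩
  have hni : i ∉ s.biUnion t := by simpa using hA hi
  simp only [Finset.mem_biUnion, not_exists, not_and] at hni
  have := hni j hj
  simp only [ht, Finset.mem_filter, Finset.mem_univ, true_and] at this
  simpa using this

private lemma key_real (n a : ℕ) (ha1 : 1 ≤ a) (han : a ≤ n) (q : ℝ) (hq0 : 0 ≤ q)
    (hq1 : q ≤ 1) (H : ((n : ℝ) + 1) ^ 3 * q ^ (n / 2) ≤ 1) :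
    (n.choose (n + 1 - a) : ℝ) * (n.choose a) * q ^ ((n + 1 - a) * a) ≤
      ((n : ℝ) + 1) * q ^ (n / 2) := by
  set b := n + 1 - a with hb
  set c := min a b with hc
  set d := max a b with hd
  set m := n / 2 with hm
  have hb1 : 1 ≤ b := by omega
  have hbn : b ≤ n := by omega
  have hab : a + b = n + 1 := by omega
  have hc1 : 1 ≤ c := by omega
  have hcd : c + d = n + 1 := by omega
  have hdm : m ≤ d := by omega
  have hqm0 : 0 ≤ q ^ m := pow_nonneg hq0 m
  -- bound on the power of q
  have hpow : q ^ (b * a) ≤ q ^ (m * c) := by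
    apply pow_le_pow_of_le_one hq0 hq1
    calc m * c ≤ d * c := Nat.mul_le_mul_right c hdm
      _ ≤ b * a := by rcases le_total a b with h' | h' <;> simp [hc, hd, min_eq_left,
            max_eq_right, min_eq_right, max_eq_left, h'] <;> ring_nf <;> omega
  -- bound on the binomial coefficients
  have hchoose : (n.choose b) * (n.choose a) ≤ (n + 1) ^ (2 * c - 1) := by
    have key : ∀ x y : ℕ, 1 ≤ x → x ≤ y → x + y = n + 1 →
        (n.choose x) * (n.choose y) ≤ (n + 1) ^ (2 * x - 1) := by
      intro x y hx1 hxy hxyn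
      have hyn : y ≤ n := by omega
      have h1 : n.choose x ≤ (n + 1) ^ x :=
        le_trans (Nat.choose_le_pow n x) (Nat.pow_le_pow_left (by omega) x)
      have h2 : n.choose y ≤ (n + 1) ^ (x - 1) := by
        have : n.choose y = n.choose (n - y) := (Nat.choose_symm hyn).symm
        rw [this]
        have hny : n - y = x - 1 := by omega
        rw [hny]
        exact le_trans (Nat.choose_le_pow n (x - 1)) (Nat.pow_le_pow_left (by omega) _)
      calc (n.choose x) * (n.choose y) ≤ (n + 1) ^ x * (n + 1) ^ (x - 1) :=
            Nat.mul_le_mul h1 h2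
        _ = (n + 1) ^ (2 * x - 1) := by rw [← pow_add]; congr 1; omega
    rcases le_total a b with h' | h'
    · have := key a b ha1 h' hab
      calc (n.choose b) * (n.choose a) = (n.choose a) * (n.choose b) := by ring
        _ ≤ (n + 1) ^ (2 * a - 1) := this
        _ = (n + 1) ^ (2 * c - 1) := by rw [hc, min_eq_left h']
    · have := key b a hb1 h' (by omega)
      calc (n.choose b) * (n.choose a) ≤ (n + 1) ^ (2 * b - 1) := this
        _ = (n + 1) ^ (2 * c - 1) := by rw [hc, min_eq_right h']
  -- combine
  have hchooseR : (n.choose b : ℝ) * (n.choose a) ≤ ((n : ℝ) + 1) ^ (2 * c - 1) := by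
    have := hchoose
    push_cast
    calc (n.choose b : ℝ) * (n.choose a) = ((n.choose b * n.choose a : ℕ) : ℝ) := by push_cast; ring
      _ ≤ (((n + 1) ^ (2 * c - 1) : ℕ) : ℝ) := by exact_mod_cast this
      _ = ((n : ℝ) + 1) ^ (2 * c - 1) := by push_cast; ring
  have step1 : (n.choose b : ℝ) * (n.choose a) * q ^ (b * a) ≤
      ((n : ℝ) + 1) ^ (2 * c - 1) * q ^ (m * c) := by
    have hn0 : (0 : ℝ) ≤ (n : ℝ) + 1 := by positivity
    exact mul_le_mul hchooseR hpow (pow_nonneg hq0 _) (pow_nonneg hn0 _)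
  refine le_trans step1 ?_
  -- now show (n+1)^(2c-1) * q^(mc) ≤ (n+1) * q^m
  obtain ⟨e, he⟩ : ∃ e, c = e + 1 := ⟨c - 1, by omega⟩
  have h2c : 2 * c - 1 = 1 + 2 * e := by omega
  have hmc : m * c = m + m * e := by rw [he]; ring
  have hn1 : (1 : ℝ) ≤ (n : ℝ) + 1 := by
    have : (0 : ℝ) ≤ (n : ℝ) := Nat.cast_nonneg n
    linarith
  rw [h2c, hmc, pow_add, pow_add, pow_one]
  have hn1e : ((n : ℝ) + 1) ^ 1 = (n : ℝ) + 1 := pow_one _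
  have hfac : ((n : ℝ) + 1) ^ (2 * e) * q ^ (m * e) ≤ 1 := by
    have h1 : ((n : ℝ) + 1) ^ (2 * e) * q ^ (m * e) = (((n : ℝ) + 1) ^ 2 * q ^ m) ^ e := by
      rw [mul_pow, ← pow_mul, ← pow_mul]
    rw [h1]
    have h2 : ((n : ℝ) + 1) ^ 2 * q ^ m ≤ 1 := by
      refine le_trans ?_ H
      apply mul_le_mul_of_nonneg_right _ hqm0
      exact pow_le_pow_right₀ hn1 (by omega)
    exact pow_le_one₀ (by positivity) h2
  calc ((n : ℝ) + 1) * ((n : ℝ) + 1) ^ (2 * e) * (q ^ m * q ^ (m * e)) =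
        (((n : ℝ) + 1) * q ^ m) * (((n : ℝ) + 1) ^ (2 * e) * q ^ (m * e)) := by ring
    _ ≤ (((n : ℝ) + 1) * q ^ m) * 1 := by
        apply mul_le_mul_of_nonneg_left hfac
        positivity
    _ = ((n : ℝ) + 1) * q ^ m := by ring

private lemma measure_event (n : ℕ) (p : ℝ) (hp0 : 0 < p) (hp1 : p < 1)
    (μ : Measure (Fin n → Fin n → Bool))
    (hμ : ∀ a : Fin n → Fin n → Bool,
      μ {a} = ∏ i, ∏ j, ENNReal.ofReal (if a i j then p else 1 - p))
    (A B : Finset (Fin n)) :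
    μ {ω : Fin n → Fin n → Bool | ∀ i ∈ A, ∀ j ∈ B, ω i j = false} =
      ENNReal.ofReal (1 - p) ^ (A.card * B.card) := by
  classical
  set w : Bool → ENNReal := fun b => ENNReal.ofReal (if b then p else 1 - p) with hw
  set u : Fin n → Fin n → Bool → ENNReal := fun i j b =>
    if i ∈ A ∧ j ∈ B ∧ b = true then 0 else w b with hu
  haveI : DecidablePred (· ∈ {ω : Fin n → Fin n → Bool | ∀ i ∈ A, ∀ j ∈ B, ω i j = false}) :=
    fun _ => Classical.dec _
  have hms := measure_set_eq_sum μ {ω : Fin n → Fin n → Bool | ∀ i ∈ A, ∀ j ∈ B, ω i j = false}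
  rw [hms]
  simp only [hμ]
  have E1 : ∑ x : Fin n → Fin n → Bool, ∏ i, ∏ j, u i j (x i j) =
      ∑ x ∈ Finset.univ.filter
        (· ∈ {ω : Fin n → Fin n → Bool | ∀ i ∈ A, ∀ j ∈ B, ω i j = false}),
        ∏ i, ∏ j, w (x i j) := by
    rw [← Finset.sum_subset (Finset.filter_subset
      (· ∈ {ω : Fin n → Fin n → Bool | ∀ i ∈ A, ∀ j ∈ B, ω i j = false})
      (Finset.univ : Finset (Fin n → Fin n → Bool)))]
    · apply Finset.sum_congr rfl
      intro x hx
      simp only [Finset.mem_filter, Set.mem_setOf_eq] at hx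
      apply Finset.prod_congr rfl; intro i _
      apply Finset.prod_congr rfl; intro j _
      rw [hu]
      by_cases hij : i ∈ A ∧ j ∈ B ∧ x i j = true
      · exact absurd (hx.2 i hij.1 j hij.2.1) (by simp [hij.2.2])
      · simp [hij]
    · intro x _ hx
      simp only [Finset.mem_filter, Finset.mem_univ, true_and, Set.mem_setOf_eq, not_forall] at hx
      obtain ⟨i, hi, j, hj, hxij⟩ := hx
      have hxt : x i j = true := by
        cases hb : x i j
        · exact absurd hb hxij
        · rfl
      apply Finset.prod_eq_zero (Finset.mem_univ i)
      apply Finset.prod_eq_zero (Finset.mem_univ j)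
      simp [hu, hi, hj, hxt]
  rw [← E1]
  have E2 : ∑ x : Fin n → Fin n → Bool, ∏ i, ∏ j, u i j (x i j) =
      ∏ i, ∏ j, (u i j true + u i j false) := by
    rw [sum_fn_ennreal (fun i (f : Fin n → Bool) => ∏ j, u i j (f j))]
    apply Finset.prod_congr rfl
    intro i _
    rw [sum_fn_ennreal (fun j b => u i j b)]
    apply Finset.prod_congr rfl
    intro j _
    simp [Fintype.sum_bool, add_comm]
  rw [E2]
  have E3 : ∀ i j, u i j true + u i j false =
      if i ∈ A ∧ j ∈ B then ENNReal.ofReal (1 - p) else 1 := by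
    intro i j
    by_cases hij : i ∈ A ∧ j ∈ B
    · simp [hu, hw, hij]
    · have h1 : u i j true = ENNReal.ofReal p := by
        show (if i ∈ A ∧ j ∈ B ∧ (true : Bool) = true then 0 else w true) = _
        rw [if_neg (fun h => hij ⟨h.1, h.2.1⟩)]
        simp [hw]
      have h2 : u i j false = ENNReal.ofReal (1 - p) := by
        show (if i ∈ A ∧ j ∈ B ∧ (false : Bool) = true then 0 else w false) = _
        rw [if_neg (fun h => Bool.false_ne_true h.2.2)]
        simp [hw]
      rw [h1, h2, if_neg hij, ← ENNReal.ofReal_add hp0.le (by linarith)]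
      norm_num
  simp only [E3]
  set Q := ENNReal.ofReal (1 - p) with hQ
  calc ∏ i, ∏ j, (if i ∈ A ∧ j ∈ B then Q else 1)
      = ∏ i, (if i ∈ A then Q ^ B.card else 1) := by
        apply Finset.prod_congr rfl; intro i _
        by_cases hi : i ∈ A
        · rw [if_pos hi]
          have hb : ∀ j, (if i ∈ A ∧ j ∈ B then Q else 1) = (if j ∈ B then Q else 1) :=
            fun j => by simp [hi]
          simp only [hb]
          rw [Finset.prod_ite_mem Finset.univ B (fun _ => Q), Finset.univ_inter,
            Finset.prod_const]
        · simp [hi]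
    _ = Q ^ (A.card * B.card) := by
        rw [Finset.prod_ite_mem Finset.univ A (fun _ => Q ^ B.card), Finset.univ_inter,
          Finset.prod_const, ← pow_mul, mul_comm]

theorem random_bipartite_pm_probability
    (n : ℕ) (hn : 1 ≤ n) (p : ℝ) (hp0 : 0 < p) (hp1 : p < 1)
    (μ : Measure (Fin n → Fin n → Bool)) [IsProbabilityMeasure μ]
    -- the entries are i.i.d. Bernoulli(`p`)
    (hμ : ∀ a : Fin n → Fin n → Bool,
      μ {a} = ∏ i, ∏ j, ENNReal.ofReal (if a i j then p else 1 - p)) :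
    ENNReal.ofReal (1 - ((n : ℝ) + 1) ^ 3 * (1 - p) ^ (n / 2)) ≤
      μ {ω | ∃ σ : Equiv.Perm (Fin n), ∀ j, ω (σ j) j = true} := by
  classical
  set q : ℝ := 1 - p with hq
  have hq0 : 0 ≤ q := by simp [hq]; linarith
  have hq1 : q ≤ 1 := by simp [hq]; linarith
  set m := n / 2 with hm
  set c : ℝ := ((n : ℝ) + 1) ^ 3 * q ^ m with hcdef
  have hc0 : 0 ≤ c := by positivity
  by_cases H : c ≤ 1
  swap
  · -- trivial case: the bound is nonpositive
    have : (1 : ℝ) - c ≤ 0 := by linarith [not_le.mp H]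
    rw [ENNReal.ofReal_eq_zero.mpr this]
    exact zero_le
  -- main case
  set S : Set (Fin n → Fin n → Bool) :=
    {ω | ∃ σ : Equiv.Perm (Fin n), ∀ j, ω (σ j) j = true} with hS
  have hSm : MeasurableSet S := (Set.toFinite S).measurableSet
  -- union bound on the complement
  have hcompl : μ Sᶜ ≤ ENNReal.ofReal c := by
    set Z : Finset (Fin n) → Finset (Fin n) → Set (Fin n → Fin n → Bool) :=
      fun A B => {ω | ∀ i ∈ A, ∀ j ∈ B, ω i j = false} with hZ
    have hsub : Sᶜ ⊆ ⋃ a ∈ Finset.Icc 1 n, ⋃ B ∈ Finset.powersetCard a (Finset.univ : Finset (Fin n)),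
        ⋃ A ∈ Finset.powersetCard (n + 1 - a) (Finset.univ : Finset (Fin n)), Z A B := by
      intro ω hω
      have hnpm : ¬ ∃ σ : Equiv.Perm (Fin n), ∀ j, ω (σ j) j = true := hω
      obtain ⟨B, hB1, hBn, A, hAcard, hAB⟩ := exists_violator n ω hnpm
      simp only [Set.mem_iUnion]
      exact ⟨B.card, by simp [Finset.mem_Icc, hB1, hBn],
        B, by simp [Finset.mem_powersetCard_univ], A,
        by simp [Finset.mem_powersetCard_univ, hAcard], hAB⟩
    calc μ Sᶜ ≤ ∑ a ∈ Finset.Icc 1 n,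
        μ (⋃ B ∈ Finset.powersetCard a (Finset.univ : Finset (Fin n)),
          ⋃ A ∈ Finset.powersetCard (n + 1 - a) (Finset.univ : Finset (Fin n)), Z A B) :=
          le_trans (measure_mono hsub) (measure_biUnion_finset_le _ _)
      _ ≤ ∑ a ∈ Finset.Icc 1 n, ENNReal.ofReal (((n : ℝ) + 1) * q ^ m) := by
          apply Finset.sum_le_sum
          intro a ha
          rw [Finset.mem_Icc] at ha
          calc μ (⋃ B ∈ Finset.powersetCard a (Finset.univ : Finset (Fin n)),
              ⋃ A ∈ Finset.powersetCard (n + 1 - a) (Finset.univ : Finset (Fin n)), Z A B)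
              ≤ ∑ B ∈ Finset.powersetCard a (Finset.univ : Finset (Fin n)),
                ∑ A ∈ Finset.powersetCard (n + 1 - a) (Finset.univ : Finset (Fin n)),
                  μ (Z A B) := le_trans (measure_biUnion_finset_le _ _)
                    (Finset.sum_le_sum fun B _ => measure_biUnion_finset_le _ _)
            _ = ∑ B ∈ Finset.powersetCard a (Finset.univ : Finset (Fin n)),
                ∑ A ∈ Finset.powersetCard (n + 1 - a) (Finset.univ : Finset (Fin n)),
                  ENNReal.ofReal (q ^ ((n + 1 - a) * a)) := by
                apply Finset.sum_congr rfl; intro B hB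
                apply Finset.sum_congr rfl; intro A hA
                rw [Finset.mem_powersetCard_univ] at hA hB
                rw [hZ, measure_event n p hp0 hp1 μ hμ A B, hA, hB,
                  ← ENNReal.ofReal_pow hq0]
            _ = ((n.choose a : ENNReal) * (n.choose (n + 1 - a) : ENNReal)) *
                  ENNReal.ofReal (q ^ ((n + 1 - a) * a)) := by
                rw [Finset.sum_const, Finset.sum_const, Finset.card_powersetCard,
                  Finset.card_powersetCard, Finset.card_univ, Fintype.card_fin,
                  smul_smul, nsmul_eq_mul]
                push_cast
                ring
            _ = ENNReal.ofReal ((n.choose (n + 1 - a) : ℝ) * (n.choose a) *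
                  q ^ ((n + 1 - a) * a)) := by
                rw [← ENNReal.ofReal_natCast (n.choose a),
                  ← ENNReal.ofReal_natCast (n.choose (n + 1 - a)),
                  ← ENNReal.ofReal_mul (by positivity),
                  ← ENNReal.ofReal_mul (by positivity)]
                congr 1
                ring
            _ ≤ ENNReal.ofReal (((n : ℝ) + 1) * q ^ m) :=
                ENNReal.ofReal_le_ofReal
                  (key_real n a ha.1 ha.2 q hq0 hq1 (by rw [← hcdef]; exact H))
      _ = (n : ENNReal) * ENNReal.ofReal (((n : ℝ) + 1) * q ^ m) := by
          rw [Finset.sum_const, Nat.card_Icc, nsmul_eq_mul]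
          norm_num
      _ ≤ ENNReal.ofReal c := by
          rw [← ENNReal.ofReal_natCast n, ← ENNReal.ofReal_mul (by positivity)]
          apply ENNReal.ofReal_le_ofReal
          rw [hcdef]
          have hqm0 : 0 ≤ q ^ m := pow_nonneg hq0 m
          nlinarith [pow_nonneg (by positivity : (0:ℝ) ≤ (n:ℝ) + 1) 3,
            sq_nonneg ((n : ℝ) + 1)]
  -- conclude
  have h1 : μ S + μ Sᶜ = 1 := by
    rw [measure_add_measure_compl hSm, measure_univ]
  calc ENNReal.ofReal (1 - c) = 1 - ENNReal.ofReal c := by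
        rw [ENNReal.ofReal_sub 1 hc0, ENNReal.ofReal_one]
    _ ≤ μ S := by
        rw [tsub_le_iff_right]
        calc (1 : ENNReal) = μ S + μ Sᶜ := h1.symm
          _ ≤ μ S + ENNReal.ofReal c := add_le_add le_rfl hcompl
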